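/- Let p be a prime and m ≥ 1. Define E⁰(m) := { [[α,β],[γ,−α]] : α ∈ ℚ_p, β, γ ∈ 2α·p^m ℤ_p } ⊆ the traceless 2×2 matrices over ℚ_p. Then for every x, y ∈ p^m ℤ_p and z ∈ 1 + p^m ℤ_p, conjugation by g := n'(x)·n(y)·a(z) (with n'(x) = [[1,0],[x,1]], n(y) = [[1,y],[0,1]], a(z) = [[z,0],[0,1]]) maps E⁰(m) onto E⁰(m), i.e. g·E⁰(m)·g^{-1} = E⁰(m). -/

import Mathlib

open Matrix

section helpers
variable {p : ℕ} [Fact p.Prime]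

lemma usub (u v : ℚ_[p]) : ‖u - v‖ ≤ max ‖u‖ ‖v‖ := by
  rw [sub_eq_add_neg]
  simpa using Padic.nonarchimedean u (-v)

lemma uadd (u v : ℚ_[p]) : ‖u + v‖ ≤ max ‖u‖ ‖v‖ := Padic.nonarchimedean u v

lemma unit_add (u v : ℚ_[p]) (hu : ‖u‖ = 1) (hv : ‖v‖ < 1) : ‖u + v‖ = 1 := by
  rw [Padic.add_eq_max_of_ne (by rw [hu]; exact (ne_of_lt hv).symm), hu,
    max_eq_left hv.le]

lemma inv2 (a b c d : ℚ_[p]) :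
    !![a,b;c,d]⁻¹ = (a*d-b*c)⁻¹ • !![d,-b;-c,a] := by
  rw [Matrix.inv_def, Matrix.adjugate_fin_two, Matrix.det_fin_two_of, Ring.inverse_eq_inv']
  simp

lemma key (ε : ℝ) (hε1 : ε < 1)
    (a b c d s t α : ℚ_[p]) (ha : ‖a‖ = 1) (hd : ‖d‖ = 1) (hb : ‖b‖ ≤ ε) (hc : ‖c‖ ≤ ε)
    (hs : ‖s‖ ≤ ε) (ht : ‖t‖ ≤ ε) :
    ∃ α' s' t' : ℚ_[p], ‖s'‖ ≤ ε ∧ ‖t'‖ ≤ ε ∧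
      !![a,b;c,d] * !![α, 2*α*s; 2*α*t, -α] * !![a,b;c,d]⁻¹
        = !![α', 2*α'*s'; 2*α'*t', -α'] := by
  have hε0 : 0 ≤ ε := le_trans (norm_nonneg _) hs
  have h2 : ‖(2:ℚ_[p])‖ ≤ 1 := by
    simpa using Padic.norm_int_le_one (p := p) 2
  have small : ∀ u v : ℚ_[p], ‖u‖ ≤ ε → ‖v‖ ≤ ε → ‖u * v‖ < 1 := by
    intro u v hu hv
    calc ‖u*v‖ = ‖u‖*‖v‖ := norm_mul _ _
    _ ≤ ε * ε := mul_le_mul hu hv (norm_nonneg _) hε0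
    _ < 1 := by nlinarith
  have hδn : ‖a*d - b*c‖ = 1 := by
    have : ‖-(b*c)‖ < 1 := by rw [norm_neg]; exact small b c hb hc
    rw [sub_eq_add_neg]
    exact unit_add _ _ (by rw [norm_mul, ha, hd, mul_one]) this
  have hδ : a*d - b*c ≠ 0 := fun h => by simp [h] at hδn
  set w : ℚ_[p] := a*d + (b*c + 2*t*b*d - 2*s*a*c) with hw
  have hrest : ‖b*c + 2*t*b*d - 2*s*a*c‖ < 1 := by
    have h1 : ‖b*c‖ < 1 := small b c hb hc
    have h2' : ‖2*t*b*d‖ < 1 := by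
      have e : ‖2*t*b*d‖ = ‖(2:ℚ_[p])‖*‖t‖*‖b‖*‖d‖ := by rw [norm_mul, norm_mul, norm_mul]
      rw [e, hd, mul_one]
      have : ‖(2:ℚ_[p])‖*‖t‖*‖b‖ ≤ 1*ε*ε := by gcongr <;> positivity
      nlinarith
    have h3' : ‖2*s*a*c‖ < 1 := by
      have e : ‖2*s*a*c‖ = ‖(2:ℚ_[p])‖*‖s‖*‖a‖*‖c‖ := by rw [norm_mul, norm_mul, norm_mul]
      rw [e, ha, mul_one]
      have : ‖(2:ℚ_[p])‖*‖s‖*‖c‖ ≤ 1*ε*ε := by gcongr <;> positivity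
      nlinarith
    exact lt_of_le_of_lt (usub _ _)
      (max_lt (lt_of_le_of_lt (uadd _ _) (max_lt h1 h2')) h3')
  have hwn : ‖w‖ = 1 := unit_add _ _ (by rw [norm_mul, ha, hd, mul_one]) hrest
  have hw0 : w ≠ 0 := fun h => by simp [h] at hwn
  have hsq : ∀ u v : ℚ_[p], ‖u‖ ≤ ε → ‖v‖ ≤ 1 → ‖u * v^2‖ ≤ ε := by
    intro u v hu hv
    rw [norm_mul, norm_pow]
    calc ‖u‖ * ‖v‖^2 ≤ ε * 1^2 := by gcongr <;> positivity
    _ = ε := by ring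
  refine ⟨α * w / (a*d-b*c), (s*a^2 - t*b^2 - a*b)/w, (t*d^2 - s*c^2 + c*d)/w, ?_, ?_, ?_⟩
  · rw [norm_div, hwn, div_one]
    refine le_trans (usub _ _) (max_le (le_trans (usub _ _) (max_le ?_ ?_)) ?_)
    · exact hsq s a hs ha.le
    · exact hsq t b ht (hb.trans hε1.le)
    · rw [norm_mul, ha, one_mul]; exact hb
  · rw [norm_div, hwn, div_one]
    refine le_trans (uadd _ _) (max_le (le_trans (usub _ _) (max_le ?_ ?_)) ?_)
    · exact hsq t d ht hd.le
    · exact hsq s c hs (hc.trans hε1.le)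
    · rw [norm_mul, hd, mul_one]; exact hc
  · rw [inv2, Matrix.mul_smul, Matrix.mul_fin_two, Matrix.mul_fin_two]
    ext i j
    fin_cases i <;> fin_cases j <;>
      · simp only [Matrix.smul_apply, Matrix.cons_val', Matrix.cons_val_zero,
          Matrix.cons_val_one, Matrix.head_cons, Matrix.head_fin_const, Matrix.empty_val',
          Matrix.cons_val_fin_one, Matrix.of_apply, Fin.isValue, smul_eq_mul, Fin.zero_eta, Fin.mk_one]
        field_simp
        ring

lemma conj_conj (g h : Matrix (Fin 2) (Fin 2) ℚ_[p]) (z : ℚ_[p]) (hz : z ≠ 0)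
    (hgh : g*h = z • 1) (hhg : h*g = z • 1) (A : Matrix (Fin 2) (Fin 2) ℚ_[p]) :
    g * (h * A * h⁻¹) * g⁻¹ = A := by
  have hhinv : h⁻¹ = z⁻¹ • g := Matrix.inv_eq_right_inv
    (by rw [Matrix.mul_smul, hhg, smul_smul, inv_mul_cancel₀ hz, one_smul])
  have hginv : g⁻¹ = z⁻¹ • h := Matrix.inv_eq_right_inv
    (by rw [Matrix.mul_smul, hgh, smul_smul, inv_mul_cancel₀ hz, one_smul])
  rw [hhinv, hginv]
  simp only [Matrix.mul_smul, Matrix.smul_mul, smul_smul]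
  rw [show g * (h * A * g) * h = (g*h) * A * (h*g) by
    simp only [Matrix.mul_assoc]; rw [hgh, hhg], hgh, hhg]
  simp only [Matrix.smul_mul, Matrix.mul_smul, smul_smul, Matrix.one_mul, Matrix.mul_one]
  rw [show z⁻¹ * z⁻¹ * (z * z) = 1 by field_simp]
  exact one_smul _ _

end helpers

/-- Conjugation by elements n'(x)n(y)a(z) of the m-th principal congruence subgroup
preserves the near-diagonal cone E⁰(m) of traceless 2×2 matrices over ℚ_p. -/
theorem stmt_19 (p : ℕ) [Fact p.Prime] (m : ℕ) (hm : 1 ≤ m)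
    (E0 : Set (Matrix (Fin 2) (Fin 2) ℚ_[p]))
    (hE0 : E0 = {A | ∃ α β γ : ℚ_[p],
        (∃ t : ℚ_[p], ‖t‖ ≤ (p : ℝ) ^ (-(m : ℤ)) ∧ β = 2 * α * t) ∧
        (∃ t : ℚ_[p], ‖t‖ ≤ (p : ℝ) ^ (-(m : ℤ)) ∧ γ = 2 * α * t) ∧
        A = !![α, β; γ, -α]})
    (x y z : ℚ_[p])
    (hx : ‖x‖ ≤ (p : ℝ) ^ (-(m : ℤ))) (hy : ‖y‖ ≤ (p : ℝ) ^ (-(m : ℤ)))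
    (hz : ‖z - 1‖ ≤ (p : ℝ) ^ (-(m : ℤ))) :
    (fun A => (!![1, 0; x, 1] * !![1, y; 0, 1] * !![z, 0; 0, 1]) * A
        * (!![1, 0; x, 1] * !![1, y; 0, 1] * !![z, 0; 0, 1])⁻¹) '' E0 = E0 := by
  set ε : ℝ := (p : ℝ) ^ (-(m : ℤ)) with hεdef
  have hp1 : (1:ℝ) < p := by exact_mod_cast (Fact.out : p.Prime).one_lt
  have hε1 : ε < 1 := by
    rw [hεdef, _root_.zpow_neg, zpow_natCast]
    rw [inv_lt_one₀ (by positivity)]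
    exact one_lt_pow₀ hp1 (by omega)
  have hε0 : 0 ≤ ε := le_trans (norm_nonneg _) hx
  have hzn : ‖z‖ = 1 := by
    have := unit_add 1 (z - 1) (norm_one) (lt_of_le_of_lt hz hε1)
    simpa using this
  have hz0 : z ≠ 0 := fun h => by simp [h] at hzn
  have hxy : ‖x * y‖ < 1 := by
    rw [norm_mul]
    calc ‖x‖ * ‖y‖ ≤ ε * ε := mul_le_mul hx hy (norm_nonneg _) hε0
    _ < 1 := by nlinarith
  have hxyn : ‖1 + x*y‖ = 1 := unit_add 1 (x*y) norm_one hxy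
  have hxz : ‖x * z‖ ≤ ε := by rw [norm_mul, hzn, mul_one]; exact hx
  have hprod : !![(1:ℚ_[p]), 0; x, 1] * !![1, y; 0, 1] * !![z, 0; 0, 1]
      = !![z, y; x*z, 1+x*y] := by
    rw [Matrix.mul_fin_two, Matrix.mul_fin_two]
    norm_num [add_comm]
  have hgh : !![z, y; x*z, 1+x*y] * !![1+x*y, -y; -(x*z), z] = z • (1 : Matrix (Fin 2) (Fin 2) ℚ_[p]) := by
    ext i j
    fin_cases i <;> fin_cases j <;>
      simp [Matrix.mul_apply, Fin.sum_univ_two, Matrix.one_apply] <;> ring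
  have hhg : !![1+x*y, -y; -(x*z), z] * !![z, y; x*z, 1+x*y] = z • (1 : Matrix (Fin 2) (Fin 2) ℚ_[p]) := by
    ext i j
    fin_cases i <;> fin_cases j <;>
      simp [Matrix.mul_apply, Fin.sum_univ_two, Matrix.one_apply] <;> ring
  ext A
  simp only [Set.mem_image]
  constructor
  · rintro ⟨B, hB, rfl⟩
    rw [hE0] at hB ⊢
    obtain ⟨α, β, γ, ⟨s, hsn, rfl⟩, ⟨t, htn, rfl⟩, rfl⟩ := hB
    obtain ⟨α', s', t', h1, h2, heq⟩ :=
      key ε hε1 z y (x*z) (1+x*y) s t α hzn hxyn hy hxz hsn htn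
    refine ⟨α', 2*α'*s', 2*α'*t', ⟨s', h1, rfl⟩, ⟨t', h2, rfl⟩, ?_⟩
    rw [hprod]
    exact heq
  · intro hA
    rw [hE0] at hA
    obtain ⟨α, β, γ, ⟨s, hsn, rfl⟩, ⟨t, htn, rfl⟩, rfl⟩ := hA
    obtain ⟨α', s', t', h1, h2, heq⟩ :=
      key ε hε1 (1+x*y) (-y) (-(x*z)) z s t α hxyn hzn (by rwa [norm_neg])
        (by rwa [norm_neg]) hsn htn
    refine ⟨!![1+x*y, -y; -(x*z), z] * !![α, 2*α*s; 2*α*t, -α]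
      * !![1+x*y, -y; -(x*z), z]⁻¹, ?_, ?_⟩
    · rw [hE0, heq]
      exact ⟨α', 2*α'*s', 2*α'*t', ⟨s', h1, rfl⟩, ⟨t', h2, rfl⟩, rfl⟩
    · simp only [hprod]
      exact conj_conj _ _ z hz0 hgh hhg _
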